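/- With ε(q) = 2·Σ_{i=1}^{3} (1 − cos qᵢ), the inequality (2π)^{−3} ∫_{[−π,π]³} ε(q)^{−1} dq > 11/51 holds. -/

import Mathlib

open MeasureTheory Real

noncomputable section

/-- The cube `[-π,π]³` in `ℝ³`, a fundamental domain for the torus `𝕋³`. -/
def cube3 : Set (Fin 3 → ℝ) := Set.Icc (fun _ => -π) (fun _ => π)

/-- The dispersion relation of the discrete Laplacian on `ℤ³`. -/
def εD (q : Fin 3 → ℝ) : ℝ := 2 * ∑ i, (1 - Real.cos (q i))


lemma nonneg_of_deriv {f f' : ℝ → ℝ} (hd : ∀ t, HasDerivAt f (f' t) t) (h0 : f 0 = 0)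
    (hf' : ∀ t, 0 ≤ t → 0 ≤ f' t) : ∀ t, 0 ≤ t → 0 ≤ f t := by
  intro t ht
  have hmono : MonotoneOn f (Set.Ici 0) := by
    refine monotoneOn_of_deriv_nonneg (convex_Ici 0)
      (fun x _ => (hd x).continuousAt.continuousWithinAt)
      (fun x _ => (hd x).differentiableAt.differentiableWithinAt) ?_
    intro x hx
    rw [(hd x).deriv, interior_Ici] at *
    exact hf' x (le_of_lt hx)
  calc (0:ℝ) = f 0 := h0.symm
  _ ≤ f t := hmono Set.self_mem_Ici ht ht

private lemma hd_poly (n : ℕ) (c : ℝ) (x : ℝ) :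
    HasDerivAt (fun t : ℝ => t^n / c) ((n : ℝ) * x^(n-1) / c) x :=
  (hasDerivAt_pow n x).div_const c

lemma chain_s1 (t : ℝ) (ht : 0 ≤ t) : t - t^3/6 ≤ sin t := by
  have := nonneg_of_deriv (f := fun t => sin t - (t - t^3/6))
    (f' := fun t => cos t - (1 - t^2/2)) ?_ (by norm_num) ?_ t ht
  · linarith
  · intro x
    have h1 := (Real.hasDerivAt_sin x).sub ((hasDerivAt_id' x).sub (hd_poly 3 6 x))
    exact h1.congr_deriv (by norm_num; ring)
  · intro x _; linarith [Real.one_sub_sq_div_two_le_cos (x := x)]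

lemma chain_c1 (t : ℝ) (ht : 0 ≤ t) : cos t ≤ 1 - t^2/2 + t^4/24 := by
  have := nonneg_of_deriv (f := fun t => 1 - t^2/2 + t^4/24 - cos t)
    (f' := fun t => sin t - (t - t^3/6)) ?_ (by norm_num) ?_ t ht
  · linarith
  · intro x
    have h1 := (((hasDerivAt_const x (1:ℝ)).sub (hd_poly 2 2 x)).add (hd_poly 4 24 x)).sub
      (Real.hasDerivAt_cos x)
    exact h1.congr_deriv (by norm_num; ring)
  · intro x hx; linarith [chain_s1 x hx]

lemma chain_s2 (t : ℝ) (ht : 0 ≤ t) : sin t ≤ t - t^3/6 + t^5/120 := by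
  have := nonneg_of_deriv (f := fun t => t - t^3/6 + t^5/120 - sin t)
    (f' := fun t => 1 - t^2/2 + t^4/24 - cos t) ?_ (by norm_num) ?_ t ht
  · linarith
  · intro x
    have h1 := (((hasDerivAt_id' x).sub (hd_poly 3 6 x)).add (hd_poly 5 120 x)).sub
      (Real.hasDerivAt_sin x)
    exact h1.congr_deriv (by norm_num; ring)
  · intro x hx; linarith [chain_c1 x hx]

lemma chain_c2 (t : ℝ) (ht : 0 ≤ t) : 1 - t^2/2 + t^4/24 - t^6/720 ≤ cos t := by
  have := nonneg_of_deriv (f := fun t => cos t - (1 - t^2/2 + t^4/24 - t^6/720))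
    (f' := fun t => (t - t^3/6 + t^5/120) - sin t) ?_ (by norm_num) ?_ t ht
  · linarith
  · intro x
    have h1 := (Real.hasDerivAt_cos x).sub
      ((((hasDerivAt_const x (1:ℝ)).sub (hd_poly 2 2 x)).add (hd_poly 4 24 x)).sub (hd_poly 6 720 x))
    exact h1.congr_deriv (by norm_num; ring)
  · intro x hx; linarith [chain_s2 x hx]

lemma chain_s3 (t : ℝ) (ht : 0 ≤ t) : t - t^3/6 + t^5/120 - t^7/5040 ≤ sin t := by
  have := nonneg_of_deriv (f := fun t => sin t - (t - t^3/6 + t^5/120 - t^7/5040))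
    (f' := fun t => cos t - (1 - t^2/2 + t^4/24 - t^6/720)) ?_ (by norm_num) ?_ t ht
  · linarith
  · intro x
    have h1 := (Real.hasDerivAt_sin x).sub
      ((((hasDerivAt_id' x).sub (hd_poly 3 6 x)).add (hd_poly 5 120 x)).sub (hd_poly 7 5040 x))
    exact h1.congr_deriv (by norm_num; ring)
  · intro x hx; linarith [chain_c2 x hx]

lemma chain_c3 (t : ℝ) (ht : 0 ≤ t) : cos t ≤ 1 - t^2/2 + t^4/24 - t^6/720 + t^8/40320 := by
  have := nonneg_of_deriv (f := fun t => 1 - t^2/2 + t^4/24 - t^6/720 + t^8/40320 - cos t)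
    (f' := fun t => sin t - (t - t^3/6 + t^5/120 - t^7/5040)) ?_ (by norm_num) ?_ t ht
  · linarith
  · intro x
    have h1 := (((((hasDerivAt_const x (1:ℝ)).sub (hd_poly 2 2 x)).add (hd_poly 4 24 x)).sub
      (hd_poly 6 720 x)).add (hd_poly 8 40320 x)).sub (Real.hasDerivAt_cos x)
    exact h1.congr_deriv (by norm_num; ring)
  · intro x hx; linarith [chain_s3 x hx]

lemma chain_s4 (t : ℝ) (ht : 0 ≤ t) :
    sin t ≤ t - t^3/6 + t^5/120 - t^7/5040 + t^9/362880 := by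
  have := nonneg_of_deriv
    (f := fun t => t - t^3/6 + t^5/120 - t^7/5040 + t^9/362880 - sin t)
    (f' := fun t => (1 - t^2/2 + t^4/24 - t^6/720 + t^8/40320) - cos t) ?_ (by norm_num) ?_ t ht
  · linarith
  · intro x
    have h1 := (((((hasDerivAt_id' x).sub (hd_poly 3 6 x)).add (hd_poly 5 120 x)).sub
      (hd_poly 7 5040 x)).add (hd_poly 9 362880 x)).sub (Real.hasDerivAt_sin x)
    exact h1.congr_deriv (by norm_num; ring)
  · intro x hx; have := chain_c3 x hx; linarith

lemma chain_c4 (t : ℝ) (ht : 0 ≤ t) :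
    1 - t^2/2 + t^4/24 - t^6/720 + t^8/40320 - t^10/3628800 ≤ cos t := by
  have := nonneg_of_deriv
    (f := fun t => cos t - (1 - t^2/2 + t^4/24 - t^6/720 + t^8/40320 - t^10/3628800))
    (f' := fun t => (t - t^3/6 + t^5/120 - t^7/5040 + t^9/362880) - sin t) ?_ (by norm_num) ?_ t ht
  · linarith
  · intro x
    have h1 := (Real.hasDerivAt_cos x).sub
      ((((((hasDerivAt_const x (1:ℝ)).sub (hd_poly 2 2 x)).add (hd_poly 4 24 x)).sub
        (hd_poly 6 720 x)).add (hd_poly 8 40320 x)).sub (hd_poly 10 3628800 x))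
    exact h1.congr_deriv (by norm_num; ring)
  · intro x hx; linarith [chain_s4 x hx]

/-- The degree-10 Taylor upper bound for `1 - cos`. -/
noncomputable def Pr (t : ℝ) : ℝ := t^2/2 - t^4/24 + t^6/720 - t^8/40320 + t^10/3628800

lemma one_sub_cos_le_Pr (t : ℝ) : 1 - Real.cos t ≤ Pr t := by
  rcases le_total 0 t with h | h
  · have := chain_c4 t h; rw [Pr]; linarith
  · have := chain_c4 (-t) (by linarith)
    rw [Real.cos_neg] at this; rw [Pr]; nlinarith [this]

lemma Pr_mono {s u : ℝ} (hs : 0 ≤ s) (hsu : s ≤ u) (hu : u ≤ π) : Pr s ≤ Pr u := by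
  have hmono : MonotoneOn Pr (Set.Icc 0 π) := by
    refine monotoneOn_of_deriv_nonneg (convex_Icc 0 π) ?_ ?_ ?_
    · unfold Pr; fun_prop
    · intro x _
      apply DifferentiableAt.differentiableWithinAt; unfold Pr; fun_prop
    · intro x hx
      rw [interior_Icc] at hx
      have hder : HasDerivAt Pr (x - x^3/6 + x^5/120 - x^7/5040 + x^9/362880) x := by
        have h1 := ((((hd_poly 2 2 x).sub (hd_poly 4 24 x)).add (hd_poly 6 720 x)).sub
          (hd_poly 8 40320 x)).add (hd_poly 10 3628800 x)
        exact h1.congr_deriv (by norm_num; ring)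
      rw [hder.deriv]
      have h2 := chain_s4 x (le_of_lt hx.1)
      have h3 := Real.sin_nonneg_of_nonneg_of_le_pi (le_of_lt hx.1) (le_of_lt hx.2)
      linarith
  exact hmono ⟨hs, by linarith⟩ ⟨by linarith, hu⟩ hsu



lemma continuous_εD : Continuous εD := by
  unfold εD; fun_prop

lemma norm_le_pi_of_cube {x : Fin 3 → ℝ} (hx : x ∈ cube3) : ‖x‖ ≤ π := by
  rw [pi_norm_le_iff_of_nonneg Real.pi_pos.le]
  intro i
  rw [Real.norm_eq_abs, abs_le]
  exact ⟨hx.1 i, hx.2 i⟩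

lemma eps_ge {x : Fin 3 → ℝ} (hx : ∀ i, |x i| ≤ π) : 4/π^2 * ‖x‖^2 ≤ εD x := by
  obtain ⟨i, -, hi⟩ := Finset.exists_mem_eq_sup (Finset.univ : Finset (Fin 3))
    Finset.univ_nonempty (fun i => ‖x i‖₊)
  have hnorm : ‖x‖ = |x i| := by
    rw [Pi.norm_def, hi]; simp [Real.norm_eq_abs]
  have h1 : 2/π^2 * (x i)^2 ≤ 1 - Real.cos (x i) := by
    have := Real.cos_le_one_sub_mul_cos_sq (hx i)
    linarith
  have h2 : ∀ j, (0:ℝ) ≤ 1 - Real.cos (x j) := fun j => by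
    have := Real.cos_le_one (x j); linarith
  have h3 : (1 - Real.cos (x i)) ≤ ∑ j, (1 - Real.cos (x j)) :=
    Finset.single_le_sum (fun j _ => h2 j) (Finset.mem_univ i)
  have h4 : ‖x‖^2 = (x i)^2 := by rw [hnorm, sq_abs]
  have h5 : 4/π^2 * (x i)^2 = 2*(2/π^2 * (x i)^2) := by ring
  rw [εD, h4, h5]
  linarith

lemma eps_pos_of_ne {x : Fin 3 → ℝ} (hx : ∀ i, |x i| ≤ π) {i : Fin 3} (hi : x i ≠ 0) :
    0 < εD x := by
  have h2 : ∀ j, (0:ℝ) ≤ 1 - Real.cos (x j) := fun j => by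
    have := Real.cos_le_one (x j); linarith
  have hlt : Real.cos (x i) < 1 := by
    have hne : Real.cos (x i) ≠ 1 := fun heq => hi
      ((Real.cos_eq_one_iff_of_lt_of_lt (by nlinarith [abs_le.1 (hx i), Real.pi_pos])
        (by nlinarith [abs_le.1 (hx i), Real.pi_pos])).1 heq)
    exact lt_of_le_of_ne (Real.cos_le_one _) hne
  have h3 : (1 - Real.cos (x i)) ≤ ∑ j, (1 - Real.cos (x j)) :=
    Finset.single_le_sum (fun j _ => h2 j) (Finset.mem_univ i)
  rw [εD]; nlinarith

lemma integrableOn_inv_eps : IntegrableOn (fun q => (εD q)⁻¹) cube3 := by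
  have hmeas : Measurable (fun q => (εD q)⁻¹) := continuous_εD.measurable.inv
  refine ⟨hmeas.aestronglyMeasurable, ?_⟩
  rw [hasFiniteIntegral_iff_norm]
  set A : ℕ → Set (Fin 3 → ℝ) :=
    fun k => {x | π * (1/2)^(k+1) < ‖x‖ ∧ ‖x‖ ≤ π * (1/2)^k} with hA
  have hsub : cube3 \ {0} ⊆ ⋃ k, A k := by
    intro x hx
    have hxpos : 0 < ‖x‖ := by
      rw [norm_pos_iff]
      exact hx.2
    obtain ⟨n, hn⟩ := exists_pow_lt_of_lt_one (div_pos hxpos Real.pi_pos) (by norm_num : (1:ℝ)/2 < 1)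
    have hex : ∃ k, π * (1/2)^(k+1) < ‖x‖ := by
      refine ⟨n, ?_⟩
      have h1 : π * (1/2)^(n+1) < π * (1/2)^n := by
        apply mul_lt_mul_of_pos_left _ Real.pi_pos
        apply pow_lt_pow_right_of_lt_one₀ (by norm_num) (by norm_num) (by omega)
      have h2 : π * (1/2)^n < ‖x‖ := by
        rw [← lt_div_iff₀' Real.pi_pos]  -- (1/2)^n < ‖x‖/π
        exact hn
      linarith
    set k := Nat.find hex with hk
    refine Set.mem_iUnion.2 ⟨k, Nat.find_spec hex, ?_⟩
    rcases Nat.eq_zero_or_pos k with h0 | h0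
    · rw [h0]; simpa using norm_le_pi_of_cube hx.1
    · have := Nat.find_min hex (m := k - 1) (by omega)
      push_neg at this
      have : π * (1/2)^(k-1+1) = π * (1/2)^k := by congr 1; congr 1; omega
      rw [← this]
      have := Nat.find_min hex (m := k - 1) (by omega)
      push_neg at this
      convert this using 3
  have hAmeas : ∀ k, MeasurableSet (A k) := by
    intro k
    apply MeasurableSet.inter
    · exact measurableSet_lt measurable_const measurable_norm
    · exact measurableSet_le measurable_norm measurable_const
  have hbound : ∀ k, ∫⁻ x in A k, ENNReal.ofReal ‖(εD x)⁻¹‖ ≤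
      ENNReal.ofReal (343 * (1/2)^k) := by
    intro k
    have hpt : ∀ x ∈ A k, ENNReal.ofReal ‖(εD x)⁻¹‖ ≤ ENNReal.ofReal ((4:ℝ)^k) := by
      intro x hxk
      obtain ⟨hlo, hhi⟩ := hxk
      have hle : ∀ i, |x i| ≤ π := by
        intro i
        have h1 : |x i| ≤ ‖x‖ := by
          rw [← Real.norm_eq_abs]; exact norm_le_pi_norm x i
        have h2 : π * (1/2:ℝ)^k ≤ π := by
          nlinarith [Real.pi_pos, pow_le_one₀ (by norm_num : (0:ℝ) ≤ 1/2) (by norm_num : (1:ℝ)/2 ≤ 1) (n := k)]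
        linarith
      have heps : ((4:ℝ)^k)⁻¹ < εD x := by
        have h1 := eps_ge hle
        have h2 : (π * (1/2)^(k+1))^2 < ‖x‖^2 := by
          apply sq_lt_sq' _ hlo
          nlinarith [norm_nonneg x, Real.pi_pos, pow_pos (by norm_num : (0:ℝ) < 1/2) (k+1)]
        have h3 : 4/π^2 * (π * (1/2)^(k+1))^2 = ((4:ℝ)^k)⁻¹ := by
          have e0 : (π * ((1:ℝ)/2)^(k+1))^2 = π^2 * (((1:ℝ)/2)^2)^(k+1) := by
            rw [mul_pow, ← pow_mul, mul_comm (k+1) 2, pow_mul]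
          rw [e0, show (((1:ℝ)/2)^2) = ((4:ℝ))⁻¹ by norm_num, inv_pow,
            show (4:ℝ)^(k+1) = 4 * 4^k by rw [pow_succ]; ring]
          have h4k : (4:ℝ)^k ≠ 0 := by positivity
          field_simp
        have h4 : 4/π^2 * (π * (1/2)^(k+1))^2 < 4/π^2 * ‖x‖^2 :=
          mul_lt_mul_of_pos_left h2 (by positivity)
        rw [h3] at h4; linarith
      apply ENNReal.ofReal_le_ofReal
      have hεpos : 0 < εD x := lt_trans (by positivity) heps
      rw [Real.norm_eq_abs, abs_of_nonneg (inv_nonneg.2 hεpos.le)]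
      calc (εD x)⁻¹ ≤ (((4:ℝ)^k)⁻¹)⁻¹ :=
            inv_anti₀ (by positivity) heps.le
      _ = (4:ℝ)^k := inv_inv _
    calc ∫⁻ x in A k, ENNReal.ofReal ‖(εD x)⁻¹‖
        ≤ ∫⁻ _ in A k, ENNReal.ofReal ((4:ℝ)^k) := setLIntegral_mono measurable_const hpt
      _ = ENNReal.ofReal ((4:ℝ)^k) * volume (A k) := setLIntegral_const _ _
      _ ≤ ENNReal.ofReal ((4:ℝ)^k) * ENNReal.ofReal (7 * (1/2)^k)^3 := by
          apply mul_le_mul_right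
          have hsub2 : A k ⊆ Metric.closedBall 0 (π * (1/2)^k) := by
            intro x hxk
            rw [Metric.mem_closedBall, dist_zero_right]
            exact hxk.2
          have hrnn : (0:ℝ) ≤ π * (1/2)^k := by positivity
          calc volume (A k) ≤ volume (Metric.closedBall (0 : Fin 3 → ℝ) (π * (1/2)^k)) :=
                measure_mono hsub2
            _ = ∏ _i : Fin 3, volume (Metric.closedBall (0:ℝ) (π * (1/2)^k)) := by
                rw [closedBall_pi _ hrnn, volume_pi_pi]
                simp
            _ = ENNReal.ofReal (2 * (π * (1/2)^k))^3 := by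
                rw [Real.volume_closedBall, Finset.prod_const]
                norm_num
            _ ≤ ENNReal.ofReal (7 * (1/2)^k)^3 := by
                apply pow_le_pow_left' (ENNReal.ofReal_le_ofReal _)
                nlinarith [Real.pi_lt_d2, pow_pos (by norm_num : (0:ℝ) < 1/2) k]
      _ = ENNReal.ofReal (343 * (1/2)^k) := by
          rw [← ENNReal.ofReal_pow (by positivity), ← ENNReal.ofReal_mul (by positivity)]
          congr 1
          have h8 : ((7:ℝ)*(1/2)^k)^3 = 343 * ((1:ℝ)/8)^k := by
            rw [mul_pow, ← pow_mul, mul_comm k 3, pow_mul]; norm_num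
          rw [h8, show (4:ℝ)^k * (343 * (1/8)^k) = 343 * ((4:ℝ)*(1/8))^k by
            rw [mul_pow]; ring]
          norm_num
  have h0 : volume ({(0 : Fin 3 → ℝ)} : Set (Fin 3 → ℝ)) = 0 := by
    rw [← Set.Icc_self, Real.volume_Icc_pi]
    simp
  have hcover : cube3 ⊆ ({(0 : Fin 3 → ℝ)} : Set (Fin 3 → ℝ)) ∪ ⋃ k, A k := by
    intro x hx
    by_cases hx0 : x = 0
    · exact Or.inl (by simp [hx0])
    · exact Or.inr (hsub ⟨hx, hx0⟩)
  calc ∫⁻ x in cube3, ENNReal.ofReal ‖(εD x)⁻¹‖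
      ≤ ∫⁻ x in (({(0 : Fin 3 → ℝ)} : Set (Fin 3 → ℝ)) ∪ ⋃ k, A k),
        ENNReal.ofReal ‖(εD x)⁻¹‖ :=
        lintegral_mono' (Measure.restrict_mono hcover le_rfl) le_rfl
    _ ≤ (∫⁻ x in ({(0 : Fin 3 → ℝ)} : Set (Fin 3 → ℝ)), ENNReal.ofReal ‖(εD x)⁻¹‖)
        + ∫⁻ x in (⋃ k, A k), ENNReal.ofReal ‖(εD x)⁻¹‖ := lintegral_union_le _ _ _
    _ = ∫⁻ x in (⋃ k, A k), ENNReal.ofReal ‖(εD x)⁻¹‖ := by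
        rw [setLIntegral_measure_zero _ _ h0, zero_add]
    _ ≤ ∑' k, ∫⁻ x in A k, ENNReal.ofReal ‖(εD x)⁻¹‖ := lintegral_iUnion_le _ _
    _ ≤ ∑' k, ENNReal.ofReal (343 * (1/2)^k) := ENNReal.tsum_le_tsum hbound
    _ = ∑' k, ENNReal.ofReal 343 * (ENNReal.ofReal (1/2))^k := by
        congr 1; funext k
        rw [← ENNReal.ofReal_pow (by norm_num), ← ENNReal.ofReal_mul (by norm_num)]
    _ = ENNReal.ofReal 343 * (1 - ENNReal.ofReal (1/2))⁻¹ := by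
        rw [ENNReal.tsum_mul_left, ENNReal.tsum_geometric]
    _ < ⊤ := by
        apply ENNReal.mul_lt_top ENNReal.ofReal_lt_top
        rw [lt_top_iff_ne_top]
        apply ENNReal.inv_ne_top.2
        rw [← pos_iff_ne_zero, tsub_pos_iff_lt]
        exact ENNReal.ofReal_lt_one.2 (by norm_num)


def Gn : Fin 21 → ℕ := ![0, 351, 993, 1825, 2810, 3927, 5162, 6505, 7947, 9483, 11107, 12814, 14600, 16463, 18399, 20405, 22479, 24619, 26823, 29089, 31415]

def PTn : Fin 20 → ℕ := ![22351294547102332386054903278256342463016001, 178761768225676190411643848538936643791405249, 602633189904205495308965411915683746337890625, 1423266084070877470047511552389708010000000000, 2762272276526791765164830623931185548307037649, 4728288152098143458885854975109961795792692224, 7410695231409945758764299115823789677744140625, 10868296153597819006788938571563649316874873049, 15129735337668913035558928776297442625987935449, 20174879276888659735616577097667195146397302249, 25932360395973396593399389335546704800279806976, 32275650853965520418063257600000000000000000000, 39025304370659601770712975570364813888835962849, 45935910890874003375156727825765312241755016001, 52713135496740217257050222009392400085947265625, 59025048102318273258537121963312727988181503201, 64515203963570750042762281607910407521320091801, 68825444871069200489366421636612871453408097649,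 71624561755019564424412721820900143347121793601, 72642351090181722090887415599060474994619140625]

def PDn : ℕ := 3628800 * 10^40

def Dn (k : Fin 20) : ℕ := Gn k.succ - Gn k.castSucc

def Cn (a b c : Fin 20) : ℕ :=
  (Dn a * Dn b * Dn c * PDn * 10^6) / (10^12 * 2 * (PTn a + PTn b + PTn c))

lemma Gn_mono : ∀ k : Fin 20, Gn k.castSucc < Gn k.succ := by decide
lemma Gn_pos : ∀ k : Fin 20, k ≠ 0 → 0 < Gn k.castSucc := by decide
lemma Gn_ub : ∀ k : Fin 20, Gn k.succ ≤ 31415 := by decide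
lemma Gn_pair : ∀ k k' : Fin 20, k < k' → Gn k.succ ≤ Gn k'.castSucc := by decide
lemma PTn_pos : ∀ k : Fin 20, 0 < PTn k := by decide
set_option maxRecDepth 100000 in
lemma CSUM_eq : (∑ a : Fin 20, ∑ b : Fin 20, ∑ c : Fin 20, Cn a b c) = 6822154 := by decide
lemma Cn000 : Cn 0 0 0 = 11701 := by decide

-- ## Real-valued grid data

lemma PT_val : ∀ k : Fin 20, (PTn k : ℤ) =
    1814400 * 10^32 * (Gn k.succ : ℤ)^2 - 151200 * 10^24 * (Gn k.succ : ℤ)^4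
    + 5040 * 10^16 * (Gn k.succ : ℤ)^6 - 90 * 10^8 * (Gn k.succ : ℤ)^8
    + (Gn k.succ : ℤ)^10 := by decide

def ga (k : Fin 20) : ℝ := (Gn k.castSucc : ℝ) / 10000
def gb (k : Fin 20) : ℝ := (Gn k.succ : ℝ) / 10000

lemma ga_nonneg (k : Fin 20) : 0 ≤ ga k := by rw [ga]; positivity
lemma ga_lt_gb (k : Fin 20) : ga k < gb k := by
  have h := Gn_mono k
  have h2 : (Gn k.castSucc : ℝ) < (Gn k.succ : ℝ) := by exact_mod_cast h
  rw [ga, gb]; linarith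

lemma gb_lt_pi (k : Fin 20) : gb k < π := by
  have h1 := Gn_ub k
  have h2 := Real.pi_gt_d6
  rw [gb]
  have : (Gn k.succ : ℝ) ≤ 31415 := by exact_mod_cast h1
  nlinarith

lemma Pr_gb (k : Fin 20) : Pr (gb k) = (PTn k : ℝ) / (PDn : ℝ) := by
  have h := PT_val k
  have hcast : (PTn k : ℝ) = 1814400*10^32*((Gn k.succ : ℕ):ℝ)^2
      - 151200*10^24*((Gn k.succ : ℕ):ℝ)^4 + 5040*10^16*((Gn k.succ : ℕ):ℝ)^6
      - 90*10^8*((Gn k.succ : ℕ):ℝ)^8 + ((Gn k.succ : ℕ):ℝ)^10 := by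
    exact_mod_cast h
  rw [gb, hcast, Pr, PDn]
  push_cast
  field_simp
  ring

lemma Pr_abs (t : ℝ) : Pr |t| = Pr t := by
  rcases abs_cases t with ⟨h, -⟩ | ⟨h, -⟩ <;> rw [h]
  rw [Pr, Pr]; ring

-- ## Cells

def I1 (p : Bool × Fin 20) : Set ℝ :=
  bif p.1 then Set.Ico (ga p.2) (gb p.2) else Set.Ico (-(gb p.2)) (-(ga p.2))

lemma I1_true (k : Fin 20) : I1 (true, k) = Set.Ico (ga k) (gb k) := rfl
lemma I1_false (k : Fin 20) : I1 (false, k) = Set.Ico (-(gb k)) (-(ga k)) := rfl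

abbrev ι3 := (Bool × Fin 20) × (Bool × Fin 20) × (Bool × Fin 20)

def Cell (j : ι3) : Set (Fin 3 → ℝ) :=
  Set.univ.pi fun i => I1 (![j.1, j.2.1, j.2.2] i)

lemma I1_meas (p : Bool × Fin 20) : MeasurableSet (I1 p) := by
  rcases p with ⟨_ | _, k⟩
  · rw [I1_false]; exact measurableSet_Ico
  · rw [I1_true]; exact measurableSet_Ico

lemma I1_subset (p : Bool × Fin 20) : I1 p ⊆ Set.Icc (-π) π := by
  rcases p with ⟨b, k⟩
  have h1 := ga_nonneg k
  have h2 := (ga_lt_gb k).le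
  have h3 := (gb_lt_pi k).le
  have hpi := Real.pi_pos
  rcases b with _ | _
  · rw [I1_false]; intro x ⟨ha, hb⟩; constructor <;> [linarith; linarith]
  · rw [I1_true]; intro x ⟨ha, hb⟩; constructor <;> [linarith; linarith]

lemma I1_abs_le {p : Bool × Fin 20} {x : ℝ} (hx : x ∈ I1 p) : |x| ≤ gb p.2 := by
  rcases p with ⟨b, k⟩
  have h1 := ga_nonneg k
  rw [abs_le]
  rcases b with _ | _
  · rw [I1_false] at hx; obtain ⟨ha, hb⟩ := hx; constructor <;> [linarith; linarith]
  · rw [I1_true] at hx; obtain ⟨ha, hb⟩ := hx; constructor <;> [linarith; linarith]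

lemma I1_vol (p : Bool × Fin 20) : volume (I1 p) = ENNReal.ofReal (gb p.2 - ga p.2) := by
  rcases p with ⟨b, k⟩
  rcases b with _ | _
  · rw [I1_false, Real.volume_Ico]; congr 1; ring
  · rw [I1_true, Real.volume_Ico]

lemma I1_ne_zero {p : Bool × Fin 20} (hp : p ≠ (true, (0 : Fin 20))) {x : ℝ}
    (hx : x ∈ I1 p) : x ≠ 0 := by
  rcases p with ⟨b, k⟩
  rcases b with _ | _
  · rw [I1_false] at hx
    have := ga_nonneg k
    intro h; rw [h] at hx; obtain ⟨-, hb⟩ := hx; linarith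
  · rw [I1_true] at hx
    have hk : k ≠ 0 := fun h => hp (by rw [h])
    have h0 := Gn_pos k hk
    have hga : 0 < ga k := by
      rw [ga]
      have : (0:ℝ) < (Gn k.castSucc : ℝ) := by exact_mod_cast h0
      positivity
    intro h; rw [h] at hx; obtain ⟨ha, -⟩ := hx; linarith

lemma gb_le_ga {k k' : Fin 20} (h : k < k') : gb k ≤ ga k' := by
  have := Gn_pair k k' h
  rw [gb, ga]
  have : (Gn k.succ : ℝ) ≤ (Gn k'.castSucc : ℝ) := by exact_mod_cast this
  linarith

lemma I1_disjoint {p q : Bool × Fin 20} (h : p ≠ q) : Disjoint (I1 p) (I1 q) := by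
  rcases p with ⟨b, k⟩; rcases q with ⟨b', k'⟩
  apply Set.disjoint_left.2
  intro x hx hx'
  rcases b with _ | _ <;> rcases b' with _ | _
  · have hkk : k ≠ k' := fun h' => h (by rw [h'])
    rw [I1_false] at hx hx'
    rcases lt_or_gt_of_ne hkk with hlt | hlt
    · have := gb_le_ga hlt
      have := hx.1; have := hx'.2; linarith
    · have := gb_le_ga hlt
      have := hx.2; have := hx'.1; linarith
  · rw [I1_false] at hx; rw [I1_true] at hx'
    have h1 := ga_nonneg k
    have h2 := ga_nonneg k'
    have := hx.2; have := hx'.1; linarith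
  · rw [I1_true] at hx; rw [I1_false] at hx'
    have h1 := ga_nonneg k
    have h2 := ga_nonneg k'
    have := hx.1; have := hx'.2; linarith
  · have hkk : k ≠ k' := fun h' => h (by rw [h'])
    rw [I1_true] at hx hx'
    rcases lt_or_gt_of_ne hkk with hlt | hlt
    · have := gb_le_ga hlt
      have := hx.2; have := hx'.1; linarith
    · have := gb_le_ga hlt
      have := hx.1; have := hx'.2; linarith

-- ## Cell properties

lemma Cell_meas (j : ι3) : MeasurableSet (Cell j) :=
  MeasurableSet.univ_pi fun _ => I1_meas _

lemma Cell_subset (j : ι3) : Cell j ⊆ cube3 := by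
  intro x hx
  rw [cube3, Set.mem_Icc]
  constructor <;> intro i
  · exact (I1_subset _ (hx i (Set.mem_univ i))).1
  · exact (I1_subset _ (hx i (Set.mem_univ i))).2

lemma Cell_vol (j : ι3) : volume (Cell j) =
    ENNReal.ofReal (gb j.1.2 - ga j.1.2) * (ENNReal.ofReal (gb j.2.1.2 - ga j.2.1.2) *
      ENNReal.ofReal (gb j.2.2.2 - ga j.2.2.2)) := by
  rw [Cell, volume_pi_pi, Fin.prod_univ_three]
  simp only [Matrix.cons_val_zero, Matrix.cons_val_one, Matrix.head_cons,
    Matrix.cons_val_two, Matrix.tail_cons, I1_vol]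
  ring

lemma Cell_disjoint {j j' : ι3} (h : j ≠ j') : Disjoint (Cell j) (Cell j') := by
  have hcomp : j.1 ≠ j'.1 ∨ j.2.1 ≠ j'.2.1 ∨ j.2.2 ≠ j'.2.2 := by
    by_contra hc; push_neg at hc
    exact h (Prod.ext hc.1 (Prod.ext hc.2.1 hc.2.2))
  apply Set.disjoint_left.2
  intro x hx hx'
  rcases hcomp with h1 | h1 | h1
  · exact Set.disjoint_left.1 (I1_disjoint h1)
      (by simpa using hx 0 (Set.mem_univ _)) (by simpa using hx' 0 (Set.mem_univ _))
  · exact Set.disjoint_left.1 (I1_disjoint h1)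
      (by simpa using hx 1 (Set.mem_univ _)) (by simpa using hx' 1 (Set.mem_univ _))
  · exact Set.disjoint_left.1 (I1_disjoint h1)
      (by simpa using hx 2 (Set.mem_univ _)) (by simpa using hx' 2 (Set.mem_univ _))

-- ## Per-cell bounds

def MrDen (a b c : Fin 20) : ℝ := 2 * ((PTn a : ℝ) + (PTn b : ℝ) + (PTn c : ℝ)) / (PDn : ℝ)

lemma PDn_posR : (0:ℝ) < (PDn : ℝ) := by
  have : 0 < PDn := by rw [PDn]; positivity
  exact_mod_cast this

lemma PTn_posR (k : Fin 20) : (0:ℝ) < (PTn k : ℝ) := by exact_mod_cast PTn_pos k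

lemma eps_nonneg (x : Fin 3 → ℝ) : 0 ≤ εD x := by
  rw [εD]
  have : ∀ j, (0:ℝ) ≤ 1 - Real.cos (x j) := fun j => by
    have := Real.cos_le_one (x j); linarith
  have := Finset.sum_nonneg (fun j (_ : j ∈ Finset.univ) => this j)
  linarith

def j₀ : ι3 := ((true, 0), (true, 0), (true, 0))

lemma cell_pointwise {j : ι3} (hj : j ≠ j₀) {x : Fin 3 → ℝ} (hx : x ∈ Cell j) :
    (MrDen j.1.2 j.2.1.2 j.2.2.2)⁻¹ ≤ (εD x)⁻¹ := by
  have habs : ∀ i : Fin 3, |x i| ≤ gb ((![j.1, j.2.1, j.2.2]) i).2 :=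
    fun i => I1_abs_le (hx i (Set.mem_univ i))
  have hxpi : ∀ i, |x i| ≤ π := fun i => le_trans (habs i) (gb_lt_pi _).le
  have hterm : ∀ i : Fin 3,
      1 - Real.cos (x i) ≤ (PTn ((![j.1, j.2.1, j.2.2]) i).2 : ℝ) / (PDn : ℝ) := by
    intro i
    calc 1 - Real.cos (x i) ≤ Pr (x i) := one_sub_cos_le_Pr _
    _ = Pr |x i| := (Pr_abs _).symm
    _ ≤ Pr (gb _) := Pr_mono (abs_nonneg _) (habs i) (gb_lt_pi _).le
    _ = _ := Pr_gb _
  have hub : εD x ≤ MrDen j.1.2 j.2.1.2 j.2.2.2 := by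
    rw [εD, MrDen, Fin.sum_univ_three]
    have h0 := hterm 0; have h1 := hterm 1; have h2 := hterm 2
    simp only [Matrix.cons_val_zero, Matrix.cons_val_one, Matrix.head_cons,
      Matrix.cons_val_two, Matrix.tail_cons] at h0 h1 h2
    have hPD := PDn_posR
    have hsplit : 2 * ((PTn j.1.2 : ℝ) + (PTn j.2.1.2 : ℝ) + (PTn j.2.2.2 : ℝ)) / (PDn : ℝ)
        = 2 * ((PTn j.1.2 : ℝ)/(PDn:ℝ) + (PTn j.2.1.2 : ℝ)/(PDn:ℝ) + (PTn j.2.2.2 : ℝ)/(PDn:ℝ)) := by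
      field_simp
    rw [hsplit]
    linarith
  have hpos : 0 < εD x := by
    have hcomp : j.1 ≠ (true, (0:Fin 20)) ∨ j.2.1 ≠ (true, (0:Fin 20)) ∨
        j.2.2 ≠ (true, (0:Fin 20)) := by
      by_contra hc; push_neg at hc
      exact hj (Prod.ext hc.1 (Prod.ext hc.2.1 hc.2.2))
    rcases hcomp with h1 | h1 | h1
    · exact eps_pos_of_ne hxpi (i := 0)
        (I1_ne_zero h1 (by simpa using hx 0 (Set.mem_univ _)))
    · exact eps_pos_of_ne hxpi (i := 1)
        (I1_ne_zero h1 (by simpa using hx 1 (Set.mem_univ _)))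
    · exact eps_pos_of_ne hxpi (i := 2)
        (I1_ne_zero h1 (by simpa using hx 2 (Set.mem_univ _)))
  exact inv_anti₀ hpos hub

-- ## Numeric bridge

def tN (a b c : Fin 20) : ℕ := Dn a * Dn b * Dn c * PDn
def tD (a b c : Fin 20) : ℕ := 10^12 * 2 * (PTn a + PTn b + PTn c)

lemma Cn_eq (a b c : Fin 20) : Cn a b c = tN a b c * 10^6 / tD a b c := rfl

lemma tD_posR (a b c : Fin 20) : (0:ℝ) < (tD a b c : ℝ) := by
  have : 0 < tD a b c := by
    rw [tD]
    have := PTn_pos a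
    positivity
  exact_mod_cast this

lemma Dn_cast (k : Fin 20) : (Dn k : ℝ) = (Gn k.succ : ℝ) - (Gn k.castSucc : ℝ) := by
  rw [Dn, Nat.cast_sub (Gn_mono k).le]

noncomputable def tR (a b c : Fin 20) : ℝ :=
  (MrDen a b c)⁻¹ * ((gb a - ga a) * ((gb b - ga b) * (gb c - ga c)))

lemma tR_eq (a b c : Fin 20) : tR a b c = (tN a b c : ℝ) / (tD a b c : ℝ) := by
  have hgd : ∀ k : Fin 20, gb k - ga k = (Dn k : ℝ) / 10000 := by
    intro k
    rw [gb, ga, Dn_cast]; ring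
  rw [tR, MrDen, hgd, hgd, hgd, tN, tD]
  push_cast
  rw [Dn_cast, Dn_cast, Dn_cast]
  have h1 := PTn_posR a; have h2 := PTn_posR b; have h3 := PTn_posR c
  have h4 := PDn_posR
  field_simp
  ring

lemma tR_ge (a b c : Fin 20) : (Cn a b c : ℝ) / 10^6 ≤ tR a b c := by
  rw [tR_eq, Cn_eq]
  have htD := tD_posR a b c
  have h1 : ((tN a b c * 10^6 / tD a b c : ℕ) : ℝ) ≤ ((tN a b c * 10^6 : ℕ) : ℝ) / (tD a b c : ℝ) :=
    Nat.cast_div_le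
  calc ((tN a b c * 10^6 / tD a b c : ℕ) : ℝ) / 10^6
      ≤ (((tN a b c * 10^6 : ℕ) : ℝ) / (tD a b c : ℝ)) / 10^6 := by
        exact (div_le_div_iff_of_pos_right (by norm_num)).2 h1
    _ = (tN a b c : ℝ) / (tD a b c : ℝ) := by
        push_cast
        field_simp
        ring

lemma tR_le_000 : tR 0 0 0 ≤ ((Cn 0 0 0 : ℝ) + 1) / 10^6 := by
  rw [tR_eq]
  have hD : 0 < tD 0 0 0 := by
    rw [tD]; have := PTn_pos 0; positivity
  have key : tN 0 0 0 * 10^6 < (Cn 0 0 0 + 1) * tD 0 0 0 := by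
    rw [Cn_eq]
    have h := Nat.div_add_mod (tN 0 0 0 * 10^6) (tD 0 0 0)
    have h2 := Nat.mod_lt (tN 0 0 0 * 10^6) hD
    nlinarith [Nat.zero_le (tN 0 0 0 * 10^6 / tD 0 0 0)]
  have htD := tD_posR 0 0 0
  rw [div_le_div_iff₀ htD (by norm_num : (0:ℝ) < 10^6)]
  have : ((tN 0 0 0 * 10^6 : ℕ) : ℝ) ≤ (((Cn 0 0 0 + 1) * tD 0 0 0 : ℕ) : ℝ) := by
    exact_mod_cast key.le
  push_cast at this
  linarith

-- ## Summation

noncomputable def wgt (j : ι3) : ℝ := tR j.1.2 j.2.1.2 j.2.2.2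

lemma sum_wgt : ∑ j : ι3, wgt j = 8 * ∑ a : Fin 20, ∑ b : Fin 20, ∑ c : Fin 20, tR a b c := by
  simp only [wgt]
  simp_rw [Fintype.sum_prod_type, Fintype.sum_bool, ← Finset.sum_add_distrib, Finset.mul_sum]
  refine Finset.sum_congr rfl fun a _ => ?_
  refine Finset.sum_congr rfl fun b _ => ?_
  refine Finset.sum_congr rfl fun c _ => ?_
  ring

/-- the Watson integral `a = (2π)⁻³ ∫ dq/ε(q)` satisfies
`a > 11/51`. -/
theorem watson_integral_lower_bound :
    11 / 51 < ((2 * π) ^ 3)⁻¹ * ∫ q in cube3, (εD q)⁻¹ := by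
  have hInt := integrableOn_inv_eps
  set S : Finset ι3 := Finset.univ.erase j₀ with hS
  have hsum_le : ∑ j ∈ S, ((MrDen j.1.2 j.2.1.2 j.2.2.2)⁻¹ * (volume (Cell j)).toReal)
      ≤ ∫ q in cube3, (εD q)⁻¹ := by
    have h1 : ∀ j ∈ S, (MrDen j.1.2 j.2.1.2 j.2.2.2)⁻¹ * (volume (Cell j)).toReal
        ≤ ∫ x in Cell j, (εD x)⁻¹ := by
      intro j hj
      apply setIntegral_ge_of_const_le_real (Cell_meas j) ?_ ?_ (hInt.mono_set (Cell_subset j))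
      · rw [Cell_vol]
        exact ENNReal.mul_ne_top ENNReal.ofReal_ne_top
          (ENNReal.mul_ne_top ENNReal.ofReal_ne_top ENNReal.ofReal_ne_top)
      · intro x hx
        exact cell_pointwise (Finset.ne_of_mem_erase hj) hx
    calc ∑ j ∈ S, ((MrDen j.1.2 j.2.1.2 j.2.2.2)⁻¹ * (volume (Cell j)).toReal)
        ≤ ∑ j ∈ S, ∫ x in Cell j, (εD x)⁻¹ := Finset.sum_le_sum h1
      _ = ∫ x in ⋃ j ∈ S, Cell j, (εD x)⁻¹ :=
          (integral_biUnion_finset S (fun j _ => Cell_meas j)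
            (fun j _ j' _ h => Cell_disjoint h)
            (fun j _ => hInt.mono_set (Cell_subset j))).symm
      _ ≤ ∫ x in cube3, (εD x)⁻¹ := by
          apply setIntegral_mono_set hInt
          · exact Filter.Eventually.of_forall (fun x => inv_nonneg.2 (eps_nonneg x))
          · exact HasSubset.Subset.eventuallyLE (Set.iUnion₂_subset fun j _ => Cell_subset j)
  have hw : ∀ j : ι3, (MrDen j.1.2 j.2.1.2 j.2.2.2)⁻¹ * (volume (Cell j)).toReal = wgt j := by
    intro j
    rw [Cell_vol, wgt, tR, ENNReal.toReal_mul, ENNReal.toReal_mul,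
      ENNReal.toReal_ofReal (sub_nonneg.2 (ga_lt_gb _).le),
      ENNReal.toReal_ofReal (sub_nonneg.2 (ga_lt_gb _).le),
      ENNReal.toReal_ofReal (sub_nonneg.2 (ga_lt_gb _).le)]
  rw [Finset.sum_congr rfl (fun j _ => hw j)] at hsum_le
  have hS_eq : ∑ j ∈ S, wgt j = (∑ j : ι3, wgt j) - wgt j₀ := by
    rw [hS, Finset.sum_erase_eq_sub (Finset.mem_univ j₀)]
  have htR_sum : (6822154 : ℝ)/10^6 ≤ ∑ a : Fin 20, ∑ b : Fin 20, ∑ c : Fin 20, tR a b c := by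
    calc (6822154 : ℝ)/10^6
        = ((∑ a : Fin 20, ∑ b : Fin 20, ∑ c : Fin 20, Cn a b c : ℕ) : ℝ)/10^6 := by
          rw [CSUM_eq]; norm_num
      _ = ∑ a : Fin 20, ∑ b : Fin 20, ∑ c : Fin 20, ((Cn a b c : ℝ)/10^6) := by
          push_cast
          rw [Finset.sum_div]
          refine Finset.sum_congr rfl fun a _ => ?_
          rw [Finset.sum_div]
          refine Finset.sum_congr rfl fun b _ => ?_
          rw [Finset.sum_div]
      _ ≤ ∑ a : Fin 20, ∑ b : Fin 20, ∑ c : Fin 20, tR a b c := by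
          refine Finset.sum_le_sum fun a _ => ?_
          refine Finset.sum_le_sum fun b _ => ?_
          refine Finset.sum_le_sum fun c _ => ?_
          exact tR_ge a b c
  have hj0 : wgt j₀ ≤ (11702 : ℝ)/10^6 := by
    have h := tR_le_000
    have hc : ((Cn 0 0 0 : ℕ) : ℝ) = 11701 := by rw [Cn000]; norm_num
    rw [hc] at h
    have : wgt j₀ = tR 0 0 0 := rfl
    rw [this]
    linarith
  have hI : (54565530:ℝ)/10^6 ≤ ∫ q in cube3, (εD q)⁻¹ := by
    have := sum_wgt
    nlinarith [hsum_le, hS_eq, htR_sum, hj0]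
  have hpi3 : π^3 < 3.141593^3 :=
    pow_lt_pow_left₀ Real.pi_lt_d6 Real.pi_pos.le (by norm_num)
  have hlit : (3.141593:ℝ)^3 < 31.0062870 := by norm_num
  have h2pi : (0:ℝ) < (2*π)^3 := by positivity
  rw [show ((2*π)^3)⁻¹ * (∫ q in cube3, (εD q)⁻¹) = (∫ q in cube3, (εD q)⁻¹)/(2*π)^3 from by
    ring]
  rw [lt_div_iff₀ h2pi, show ((2*π)^3 : ℝ) = 8*π^3 from by ring]
  have hb : π^3 < 31.0062870 := lt_trans hpi3 hlit
  nlinarith [hI, hb]
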